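/- If u² is a factor of the Thue–Morse word t, then u equals μⁿ(a), μⁿ(b), μⁿ(aba), or μⁿ(bab) for some n ≥ 0. -/

import Mathlib

/-- Alphabet: `false` = a, `true` = b. The Thue–Morse morphism μ(a)=ab, μ(b)=ba. -/
def mu (w : List Bool) : List Bool := w.flatMap (fun x => [x, !x])

/-- The Thue–Morse word: `tm n` is the parity of the binary digit sum of `n`. -/
def tm (n : ℕ) : Bool := (Nat.digits 2 n).sum % 2 == 1

/-- `w` is a (finite) factor/segment of the Thue–Morse word. -/
def IsFactorTM (w : List Bool) : Prop :=
  ∃ i : ℕ, w = (List.range w.length).map (fun k => tm (i + k))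

/-- Apply the endomorphism of {a,b}⁺ determined by a ↦ fa, b ↦ fb to a word. -/
def subst (fa fb : List Bool) (w : List Bool) : List Bool :=
  w.flatMap (fun x => if x then fb else fa)

lemma tm_two_mul (n : ℕ) : tm (2 * n) = tm n := by
  rcases Nat.eq_zero_or_pos n with h | h
  · simp [h]
  · unfold tm
    rw [Nat.digits_def' (by norm_num : 1 < 2) (by omega)]
    simp [Nat.mul_div_cancel_left, Nat.mul_mod_right]

lemma tm_two_mul_add_one (n : ℕ) : tm (2 * n + 1) = !tm n := by
  unfold tm
  rw [Nat.digits_def' (by norm_num : 1 < 2) (by omega)]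
  have h1 : (2 * n + 1) % 2 = 1 := by omega
  have h2 : (2 * n + 1) / 2 = n := by omega
  rw [h1, h2]
  simp only [List.sum_cons]
  rcases Nat.mod_two_eq_zero_or_one (Nat.digits 2 n).sum with h | h
  · simp [Nat.add_mod, h]
  · simp [Nat.add_mod, h]

lemma tm_ne (n : ℕ) : tm (2*n) ≠ tm (2*n+1) := by
  rw [tm_two_mul, tm_two_mul_add_one]; cases tm n <;> simp

lemma bne' {x y : Bool} (h : x ≠ y) : x = !y := by
  revert h; cases x <;> cases y <;> simp

lemma pair_odd {x : ℕ} (h : tm x = tm (x+1)) : x % 2 = 1 := by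
  rcases Nat.even_or_odd x with ⟨r, hr⟩ | ⟨r, hr⟩
  · exfalso
    apply tm_ne r
    rw [show 2*r+1 = x+1 from by omega, show 2*r = x from by omega]
    exact h
  · omega

lemma no_three (n : ℕ) (h1 : tm n = tm (n+1)) (h2 : tm (n+1) = tm (n+2)) : False := by
  rcases Nat.even_or_odd n with ⟨r, hr⟩ | ⟨r, hr⟩
  · exact tm_ne r (by rw [show 2*r+1 = n+1 from by omega, show 2*r = n from by omega]; exact h1)
  · exact tm_ne (r+1) (by rw [show 2*(r+1)+1 = n+2 from by omega, show 2*(r+1) = n+1 from by omega]; exact h2)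

lemma ne_ne {x y z : Bool} (h1 : x ≠ y) (h2 : y ≠ z) : x = z := by
  cases x <;> cases y <;> cases z <;> simp_all

lemma no_alt5 (i : ℕ) (h1 : tm i ≠ tm (i+1)) (h2 : tm (i+1) ≠ tm (i+2))
    (h3 : tm (i+2) ≠ tm (i+3)) (h4 : tm (i+3) ≠ tm (i+4)) : False := by
  have e1 : tm i = tm (i+2) := ne_ne h1 h2
  have e2 : tm (i+2) = tm (i+4) := ne_ne h3 h4
  rcases Nat.even_or_odd i with ⟨r, hr⟩ | ⟨r, hr⟩
  · have f1 : tm (2*r) = tm (2*(r+1)) := by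
      rw [show 2*r = i from by omega, show 2*(r+1) = i+2 from by omega]; exact e1
    have f2 : tm (2*(r+1)) = tm (2*(r+2)) := by
      rw [show 2*(r+1) = i+2 from by omega, show 2*(r+2) = i+4 from by omega]; exact e2
    rw [tm_two_mul, tm_two_mul] at f1
    rw [tm_two_mul, tm_two_mul] at f2
    exact no_three r f1 f2
  · have f1 : tm (2*r+1) = tm (2*(r+1)+1) := by
      rw [show 2*r+1 = i from by omega, show 2*(r+1)+1 = i+2 from by omega]; exact e1
    have f2 : tm (2*(r+1)+1) = tm (2*(r+2)+1) := by
      rw [show 2*(r+1)+1 = i+2 from by omega, show 2*(r+2)+1 = i+4 from by omega]; exact e2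
    rw [tm_two_mul_add_one, tm_two_mul_add_one] at f1
    rw [tm_two_mul_add_one, tm_two_mul_add_one] at f2
    exact no_three r (Bool.not_inj f1) (Bool.not_inj f2)

lemma overlap_free : ∀ p, 1 ≤ p → ∀ i, ¬ (∀ k, k ≤ p → tm (i+k) = tm (i+k+p)) := by
  intro p
  induction p using Nat.strong_induction_on with
  | _ p IH =>
  intro hp i hov
  rcases Nat.even_or_odd p with ⟨q, hq⟩ | ⟨q, hq⟩
  · -- p even, p = q + q
    have hq1 : 1 ≤ q := by omega
    rcases Nat.even_or_odd i with ⟨a, ha⟩ | ⟨a, ha⟩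
    · apply IH q (by omega) hq1 a
      intro s hs
      have h := hov (2*s) (by omega)
      rw [show i + 2*s + p = 2*(a+s+q) from by omega, show i + 2*s = 2*(a+s) from by omega,
        tm_two_mul, tm_two_mul] at h
      exact h
    · apply IH q (by omega) hq1 a
      intro s hs
      have h := hov (2*s) (by omega)
      rw [show i + 2*s + p = 2*(a+s+q)+1 from by omega, show i + 2*s = 2*(a+s)+1 from by omega,
        tm_two_mul_add_one, tm_two_mul_add_one] at h
      exact Bool.not_inj h
  · -- p odd
    rcases Nat.eq_or_lt_of_le hp with h1 | h1
    · -- p = 1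
      have e1 := hov 0 (by omega)
      have e2 := hov 1 (by omega)
      rw [show i+0+p = i+1 from by omega, show i+0 = i from by omega] at e1
      rw [show i+1+p = i+2 from by omega] at e2
      exact no_three i e1 e2
    · -- p odd, p ≥ 3
      by_cases hadj : ∃ k, k + 1 ≤ 2*p ∧ tm (i+k) = tm (i+k+1)
      · obtain ⟨k, hk, hpair⟩ := hadj
        rcases le_or_gt (k+1) p with hkp | hkp
        · have p1 := hov k (by omega)
          have p2 := hov (k+1) (by omega)
          have pair2 : tm (i+k+p) = tm ((i+k+p)+1) := by
            rw [← p1, hpair, show i+k+1 = i+(k+1) from by omega, p2,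
              show i+(k+1)+p = i+k+p+1 from by omega]
          have o1 : (i+k) % 2 = 1 := pair_odd hpair
          have o2 : (i+k+p) % 2 = 1 := pair_odd pair2
          omega
        · obtain ⟨j, hj⟩ : ∃ j, k = p + j := ⟨k - p, by omega⟩
          have p1 := hov j (by omega)
          have p2 := hov (j+1) (by omega)
          have pair1 : tm (i+j) = tm ((i+j)+1) := by
            have e1 : tm (i+j) = tm (i+k) := by
              rw [p1, show i+j+p = i+k from by omega]
            have e2 : tm ((i+j)+1) = tm (i+k+1) := by
              rw [show (i+j)+1 = i + (j+1) from by omega, p2,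
                show i+(j+1)+p = i+k+1 from by omega]
            rw [e1, e2, hpair]
          have o1 : (i+j) % 2 = 1 := pair_odd pair1
          have o2 : (i+k) % 2 = 1 := pair_odd hpair
          omega
      · push_neg at hadj
        have a0 : tm i ≠ tm (i+1) := by
          have := hadj 0 (by omega)
          rwa [show i+0+1 = i+1 from by omega, show i+0 = i from by omega] at this
        have a1 : tm (i+1) ≠ tm (i+2) := by
          have := hadj 1 (by omega)
          rwa [show i+1+1 = i+2 from by omega] at this
        have a2 : tm (i+2) ≠ tm (i+3) := by
          have := hadj 2 (by omega)
          rwa [show i+2+1 = i+3 from by omega] at this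
        have a3 : tm (i+3) ≠ tm (i+4) := by
          have := hadj 3 (by omega)
          rwa [show i+3+1 = i+4 from by omega] at this
        exact no_alt5 i a0 a1 a2 a3

def Wt (m i : ℕ) : List Bool := (List.range m).map (fun k => tm (i + k))

lemma Wt_succ (m i : ℕ) : Wt (m+1) i = Wt m i ++ [tm (i+m)] := by
  simp [Wt, List.range_succ]

lemma Wt_one (i : ℕ) : Wt 1 i = [tm i] := by simp [Wt, List.range_succ]

lemma Wt_two (i : ℕ) : Wt 2 i = [tm i, tm (i+1)] := by
  simp [Wt, List.range_succ]

lemma Wt_three (i : ℕ) : Wt 3 i = [tm i, tm (i+1), tm (i+2)] := by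
  simp [Wt, List.range_succ]

lemma mu_Wt (q a : ℕ) : mu (Wt q a) = Wt (2*q) (2*a) := by
  induction q with
  | zero => simp [Wt, mu]
  | succ q ih =>
    rw [Wt_succ, show 2*(q+1) = (2*q+1)+1 from by omega, Wt_succ, Wt_succ]
    have hmu : mu (Wt q a ++ [tm (a+q)]) = mu (Wt q a) ++ [tm (a+q), !tm (a+q)] := by
      simp [mu]
    rw [hmu, ih, show 2*a + (2*q+1) = 2*(a+q)+1 from by omega,
      show 2*a + 2*q = 2*(a+q) from by omega, tm_two_mul, tm_two_mul_add_one]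
    simp

lemma key : ∀ m, 1 ≤ m → ∀ i, (∀ k, k < m → tm (i+k) = tm (i+k+m)) →
    ∃ n : ℕ, Wt m i = mu^[n] [false] ∨ Wt m i = mu^[n] [true] ∨
      Wt m i = mu^[n] [false, true, false] ∨ Wt m i = mu^[n] [true, false, true] := by
  intro m
  induction m using Nat.strong_induction_on with
  | _ m IH =>
  intro hm i hp
  rcases Nat.lt_or_ge m 2 with hm2 | hm2
  · -- m = 1
    have hm1 : m = 1 := by omega
    subst hm1
    refine ⟨0, ?_⟩
    rw [Wt_one]
    cases h : tm i
    · exact Or.inl (by simp)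
    · exact Or.inr (Or.inl (by simp))
  · by_cases hA : ∃ j, j + 2 ≤ m ∧ tm (i+j) = tm (i+j+1)
    · -- an adjacent equal pair strictly inside u ⇒ m even
      obtain ⟨j, hj, hpair⟩ := hA
      have p1 := hp j (by omega)
      have p2 := hp (j+1) (by omega)
      have pair2 : tm (i+j+m) = tm ((i+j+m)+1) := by
        rw [← p1, hpair, show i+j+1 = i+(j+1) from by omega, p2,
          show i+(j+1)+m = i+j+m+1 from by omega]
      have o1 : (i+j) % 2 = 1 := pair_odd hpair
      have o2 : (i+j+m) % 2 = 1 := pair_odd pair2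
      obtain ⟨q, hq⟩ : ∃ q, m = 2*q := ⟨m/2, by omega⟩
      have hq1 : 1 ≤ q := by omega
      rcases Nat.even_or_odd i with ⟨a, ha⟩ | ⟨a, ha⟩
      · -- i even : desubstitute
        have ha2 : i = 2*a := by omega
        obtain ⟨n, hc⟩ := IH q (by omega) hq1 a (by
          intro s hs
          have h := hp (2*s) (by omega)
          rw [show i+2*s+m = 2*(a+s+q) from by omega, show i+2*s = 2*(a+s) from by omega,
            tm_two_mul, tm_two_mul] at h
          exact h)
        have hw : Wt m i = mu (Wt q a) := by
          rw [hq, ha2, mu_Wt]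
        refine ⟨n+1, ?_⟩
        rcases hc with h | h | h | h
        · exact Or.inl (by rw [hw, h, Function.iterate_succ_apply'])
        · exact Or.inr (Or.inl (by rw [hw, h, Function.iterate_succ_apply']))
        · exact Or.inr (Or.inr (Or.inl (by rw [hw, h, Function.iterate_succ_apply'])))
        · exact Or.inr (Or.inr (Or.inr (by rw [hw, h, Function.iterate_succ_apply'])))
      · -- i odd : contradiction with overlap-freeness
        exfalso
        apply overlap_free m (by omega) (2*a)
        intro k hk
        cases k with
        | zero =>
          have e1 : tm (2*a) = !tm (2*a+1) := bne' (tm_ne a)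
          have e2 : tm (2*(a+q)) = !tm (2*(a+q)+1) := bne' (tm_ne (a+q))
          have e3 := hp 0 (by omega)
          rw [show 2*a+0+m = 2*(a+q) from by omega, show 2*a+0 = 2*a from by omega, e1, e2]
          congr 1
          rw [show 2*a+1 = i+0 from by omega, show 2*(a+q)+1 = i+0+m from by omega]
          exact e3
        | succ k' =>
          rw [show 2*a+(k'+1)+m = i+k'+m from by omega, show 2*a+(k'+1) = i+k' from by omega]
          exact hp k' (by omega)
    · push_neg at hA
      -- hA : internal alternation of u
      rcases Nat.lt_or_ge m 3 with hm3 | hm3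
      · -- m = 2
        have hm2' : m = 2 := by omega
        subst hm2'
        have hne := hA 0 (by omega)
        rw [show i+0+1 = i+1 from by omega, show i+0 = i from by omega] at hne
        have h1 : tm (i+1) = !tm i := bne' hne.symm
        refine ⟨1, ?_⟩
        rw [Wt_two, h1]
        cases tm i
        · exact Or.inl (by decide)
        · exact Or.inr (Or.inl (by decide))
      · -- m ≥ 3
        obtain ⟨j0, hj0⟩ : ∃ j0, m = j0 + 1 := ⟨m - 1, by omega⟩
        by_cases hB1 : tm (i + j0) = tm (i + j0 + 1)
        · -- last letter of u equals first letter of next copy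
          have hlast : tm (i + j0) = tm i := by
            rw [hB1, show i+j0+1 = i+0+m from by omega, ← hp 0 (by omega),
              show i+0 = i from by omega]
          have g0 : tm (i+1) = !tm i := by
            have := hA 0 (by omega)
            rw [show i+0+1 = i+1 from by omega, show i+0 = i from by omega] at this
            exact bne' this.symm
          have g1 : tm (i+2) = !tm (i+1) := by
            have := hA 1 (by omega)
            rw [show i+1+1 = i+2 from by omega] at this
            exact bne' this.symm
          rcases Nat.lt_or_ge m 5 with hm5 | hm5
          · rcases Nat.lt_or_ge m 4 with hm4 | hm4
            · -- m = 3 : u = aba or bab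
              have hm3' : m = 3 := by omega
              subst hm3'
              refine ⟨0, ?_⟩
              rw [Wt_three, g1, g0]
              cases tm i
              · exact Or.inr (Or.inr (Or.inl (by decide)))
              · exact Or.inr (Or.inr (Or.inr (by decide)))
            · -- m = 4 : contradiction
              exfalso
              have hm4' : m = 4 := by omega
              have g2 : tm (i+3) = !tm (i+2) := by
                have := hA 2 (by omega)
                rw [show i+2+1 = i+3 from by omega] at this
                exact bne' this.symm
              have hj0' : j0 = 3 := by omega
              rw [hj0'] at hlast
              rw [g2, g1, g0] at hlast
              cases tm i <;> simp_all
          · -- m ≥ 5 : alternating 5 letters, contradiction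
            exfalso
            have a0 : tm i ≠ tm (i+1) := by
              have := hA 0 (by omega)
              rwa [show i+0+1 = i+1 from by omega, show i+0 = i from by omega] at this
            have a1 : tm (i+1) ≠ tm (i+2) := by
              have := hA 1 (by omega)
              rwa [show i+1+1 = i+2 from by omega] at this
            have a2 : tm (i+2) ≠ tm (i+3) := by
              have := hA 2 (by omega)
              rwa [show i+2+1 = i+3 from by omega] at this
            have a3 : tm (i+3) ≠ tm (i+4) := by
              have := hA 3 (by omega)
              rwa [show i+3+1 = i+4 from by omega] at this
            exact no_alt5 i a0 a1 a2 a3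
        · -- uu fully alternating, m ≥ 3 : contradiction
          exfalso
          have halt : ∀ k, k + 1 ≤ m → tm (i+k) ≠ tm (i+k+1) := by
            intro k hk
            rcases Nat.lt_or_ge (k+2) (m+1) with h | h
            · exact hA k (by omega)
            · have hkj : k = j0 := by omega
              rw [hkj]; exact hB1
          have halt2 : ∀ k, k + 2 ≤ 2*m → tm (i+k) ≠ tm (i+k+1) := by
            intro k hk
            rcases Nat.lt_or_ge (k+1) (m+1) with h | h
            · exact halt k (by omega)
            · obtain ⟨j, hj⟩ : ∃ j, k = m + j := ⟨k - m, by omega⟩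
              have e1 : tm (i+j) = tm (i+k) := by
                rw [hp j (by omega), show i+j+m = i+k from by omega]
              have e2 : tm (i+j+1) = tm (i+k+1) := by
                rw [show i+j+1 = i+(j+1) from by omega, hp (j+1) (by omega),
                  show i+(j+1)+m = i+k+1 from by omega]
              rw [← e1, ← e2]
              exact halt j (by omega)
          have a0 : tm i ≠ tm (i+1) := by
            have := halt2 0 (by omega)
            rwa [show i+0+1 = i+1 from by omega, show i+0 = i from by omega] at this
          have a1 : tm (i+1) ≠ tm (i+2) := by
            have := halt2 1 (by omega)
            rwa [show i+1+1 = i+2 from by omega] at this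
          have a2 : tm (i+2) ≠ tm (i+3) := by
            have := halt2 2 (by omega)
            rwa [show i+2+1 = i+3 from by omega] at this
          have a3 : tm (i+3) ≠ tm (i+4) := by
            have := halt2 3 (by omega)
            rwa [show i+3+1 = i+4 from by omega] at this
          exact no_alt5 i a0 a1 a2 a3

/-- If u² is a factor of t, then u is μⁿ(a), μⁿ(b), μⁿ(aba), or μⁿ(bab). -/
theorem square_factor (u : List Bool) (hu : u ≠ []) (h : IsFactorTM (u ++ u)) :
    ∃ n : ℕ, u = mu^[n] [false] ∨ u = mu^[n] [true] ∨
      u = mu^[n] [false, true, false] ∨ u = mu^[n] [true, false, true] := by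
  obtain ⟨i, heq⟩ := h
  set m := u.length with hm
  have hm1 : 1 ≤ m := by
    have := List.length_pos_iff.mpr hu
    omega
  rw [List.length_append, ← hm, List.range_add, List.map_append] at heq
  obtain ⟨h1, h2⟩ := List.append_inj heq (by simp [hm])
  -- h1 : u = (range m).map (fun k => tm (i+k)), so u = Wt m i
  have hW : u = Wt m i := h1
  have h12 : (List.range m).map (fun k => tm (i+k)) =
      (List.range m).map (fun k => tm (i + (m + k))) := by
    rw [← h1]
    rw [h2]
    simp [Function.comp]
  have hper : ∀ k, k < m → tm (i+k) = tm (i+k+m) := by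
    intro k hk
    have := List.map_inj_left.mp h12 k (List.mem_range.mpr hk)
    rwa [show i + (m + k) = i + k + m from by omega] at this
  obtain ⟨n, hc⟩ := key m hm1 i hper
  exact ⟨n, by rwa [hW]⟩
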